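/- Let w ∈ F_k be a positive (semigroup) word of length ℓ ≥ 1. Then for all n ∈ ℕ, the probability P_{S_n}(w) that w evaluates to the identity at k independently uniformly random elements of the symmetric group S_n satisfies P_{S_n}(w) ≤ (2ℓ/n)^{⌊n/(2ℓ)⌋}. -/

import Mathlib

namespace WordProbAux

open Finset

attribute [local instance] Classical.propDecidable

variable {n k : ℕ}

abbrev Tup (n k : ℕ) := Fin k → Equiv.Perm (Fin n)

noncomputable def cnt (P : Tup n k → Prop) : ℕ := (Finset.univ.filter P).card

lemma cnt_mono {P Q : Tup n k → Prop} (h : ∀ S, P S → Q S) : cnt P ≤ cnt Q := by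
  apply Finset.card_le_card
  intro S hS
  simp only [Finset.mem_filter] at *
  exact ⟨hS.1, h S hS.2⟩

lemma cnt_congr {P Q : Tup n k → Prop} (h : ∀ S, P S ↔ Q S) : cnt P = cnt Q :=
  le_antisymm (cnt_mono fun S => (h S).1) (cnt_mono fun S => (h S).2)

def Ext (S : Tup n k) (π : Fin k → Finset (Fin n × Fin n)) : Prop :=
  ∀ i, ∀ a ∈ π i, S i a.1 = a.2

def Ok (π : Fin k → Finset (Fin n × Fin n)) : Prop :=
  ∀ i, ∀ a ∈ π i, ∀ b ∈ π i, (a.1 = b.1 ↔ a.2 = b.2)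

def Dtot (π : Fin k → Finset (Fin n × Fin n)) : ℕ := ∑ i, (π i).card

def ins (π : Fin k → Finset (Fin n × Fin n)) (i : Fin k) (q : Fin n × Fin n) :
    Fin k → Finset (Fin n × Fin n) := Function.update π i (insert q (π i))

def trj (S : Tup n k) (u : List (Fin k)) (x : Fin n) : Fin n :=
  u.foldl (fun z i => S i z) x

@[simp] lemma trj_nil (S : Tup n k) (x : Fin n) : trj S [] x = x := rfl

lemma trj_cons (S : Tup n k) (i : Fin k) (u : List (Fin k)) (x : Fin n) :
    trj S (i :: u) x = trj S u (S i x) := rfl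

lemma ins_self (π : Fin k → Finset (Fin n × Fin n)) (i : Fin k) (q) :
    ins π i q i = insert q (π i) := by simp [ins]

lemma ins_ne (π : Fin k → Finset (Fin n × Fin n)) {i j : Fin k} (q) (hj : j ≠ i) :
    ins π i q j = π j := by simp [ins, Function.update_of_ne hj]

lemma ext_ins {S : Tup n k} {π} {i : Fin k} {x y : Fin n} :
    Ext S (ins π i (x, y)) ↔ Ext S π ∧ S i x = y := by
  constructor
  · intro h
    refine ⟨fun j a ha => ?_, ?_⟩
    · by_cases hj : j = i
      · subst hj
        exact h j a (by rw [ins_self]; exact Finset.mem_insert_of_mem ha)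
      · exact h j a (by rw [ins_ne _ _ hj]; exact ha)
    · exact h i (x, y) (by rw [ins_self]; exact Finset.mem_insert_self _ _)
  · rintro ⟨h1, h2⟩ j a ha
    by_cases hj : j = i
    · subst hj
      rw [ins_self] at ha
      rcases Finset.mem_insert.mp ha with rfl | ha
      · exact h2
      · exact h1 _ _ ha
    · rw [ins_ne _ _ hj] at ha
      exact h1 _ _ ha

lemma Dtot_ins {π} {i : Fin k} {q : Fin n × Fin n} (h : q ∉ π i) :
    Dtot (ins π i q) = Dtot π + 1 := by
  unfold Dtot
  have hcard : ∀ j, (ins π i q j).card = (π j).card + (if j = i then 1 else 0) := by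
    intro j
    by_cases hj : j = i
    · subst hj; rw [ins_self, Finset.card_insert_of_notMem h]; simp
    · rw [ins_ne _ _ hj]; simp [hj]
  simp_rw [hcard, Finset.sum_add_distrib]
  simp

lemma Ok_ins {π} {i : Fin k} {x y : Fin n} (hok : Ok π)
    (hx : x ∉ (π i).image Prod.fst) (hy : y ∉ (π i).image Prod.snd) :
    Ok (ins π i (x, y)) := by
  intro j a ha b hb
  by_cases hj : j = i
  · subst hj
    rw [ins_self] at ha hb
    rcases Finset.mem_insert.mp ha with rfl | ha <;>
      rcases Finset.mem_insert.mp hb with rfl | hb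
    · simp
    · constructor
      · intro h; exact absurd (Finset.mem_image.mpr ⟨b, hb, h.symm⟩) hx
      · intro h; exact absurd (Finset.mem_image.mpr ⟨b, hb, h.symm⟩) hy
    · constructor
      · intro h; exact absurd (Finset.mem_image.mpr ⟨a, ha, h⟩) hx
      · intro h; exact absurd (Finset.mem_image.mpr ⟨a, ha, h⟩) hy
    · exact hok j a ha b hb
  · rw [ins_ne _ _ hj] at ha hb
    exact hok j a ha b hb

lemma card_snd {π : Fin k → Finset (Fin n × Fin n)} (hok : Ok π) (i : Fin k) :
    ((π i).image Prod.snd).card = (π i).card := by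
  apply Finset.card_image_of_injOn
  intro a ha b hb hab
  have h1 := (hok i a ha b hb).mpr hab
  exact Prod.ext h1 hab

lemma fresh_ran {S : Tup n k} {π} {i : Fin k} {x : Fin n} (hS : Ext S π)
    (hx : x ∉ (π i).image Prod.fst) : S i x ∉ (π i).image Prod.snd := by
  intro hmem
  rcases Finset.mem_image.mp hmem with ⟨a, ha, h2⟩
  have := hS i a ha
  have hax : a.1 = x := (S i).injective (by rw [this, h2])
  exact hx (Finset.mem_image.mpr ⟨a, ha, hax⟩)


lemma cnt_swap {π : Fin k → Finset (Fin n × Fin n)} {i : Fin k} {x y y' : Fin n}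
    (hy : y ∉ (π i).image Prod.snd) (hy' : y' ∉ (π i).image Prod.snd) :
    cnt (fun S => Ext S (ins π i (x, y))) = cnt (fun S => Ext S (ins π i (x, y'))) := by
  unfold cnt
  have key : ∀ (b b' : Fin n), b ∉ (π i).image Prod.snd → b' ∉ (π i).image Prod.snd →
      ∀ S : Tup n k, Ext S (ins π i (x, b)) →
        Ext (Function.update S i (Equiv.swap b b' * S i)) (ins π i (x, b')) := by
    intro b b' hb hb' S hS
    rw [ext_ins] at hS ⊢
    constructor
    · intro j a ha
      by_cases hj : j = i
      · subst hj
        rw [Function.update_self, Equiv.Perm.mul_apply, hS.1 j a ha]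
        apply Equiv.swap_apply_of_ne_of_ne
        · intro h; exact hb (Finset.mem_image.mpr ⟨a, ha, h⟩)
        · intro h; exact hb' (Finset.mem_image.mpr ⟨a, ha, h⟩)
      · rw [Function.update_of_ne hj]
        exact hS.1 j a ha
    · rw [Function.update_self, Equiv.Perm.mul_apply, hS.2, Equiv.swap_apply_left]
  apply Finset.card_bij'
    (i := fun S _ => Function.update S i (Equiv.swap y y' * S i))
    (j := fun S _ => Function.update S i (Equiv.swap y' y * S i))
  · intro S _
    funext j
    by_cases hj : j = i
    · subst hj
      simp only [Function.update_self]
      rw [Equiv.swap_comm y' y, ← mul_assoc, Equiv.swap_mul_self, one_mul]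
    · simp only [Function.update_of_ne hj]
  · intro S _
    funext j
    by_cases hj : j = i
    · subst hj
      simp only [Function.update_self]
      rw [Equiv.swap_comm y y', ← mul_assoc, Equiv.swap_mul_self, one_mul]
    · simp only [Function.update_of_ne hj]
  · intro S hS
    simp only [Finset.mem_filter, Finset.mem_univ, true_and] at hS ⊢
    exact key y y' hy hy' S hS
  · intro S hS
    simp only [Finset.mem_filter, Finset.mem_univ, true_and] at hS ⊢
    exact key y' y hy' hy S hS

lemma cnt_partition {P : Tup n k → Prop} (f : Tup n k → Fin n) (T : Finset (Fin n))
    (h : ∀ S, P S → f S ∈ T) :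
    cnt P = ∑ y ∈ T, cnt fun S => P S ∧ f S = y := by
  unfold cnt
  rw [Finset.card_eq_sum_card_fiberwise (f := f) (t := T)
    (fun S hS => h S (Finset.mem_filter.mp hS).2)]
  refine Finset.sum_congr rfl fun y hy => ?_
  rw [Finset.filter_filter]
  congr!

lemma cnt_ext_insert_eq {π : Fin k → Finset (Fin n × Fin n)} (hok : Ok π) {i : Fin k}
    {x : Fin n} (hx : x ∉ (π i).image Prod.fst) {y : Fin n}
    (hy : y ∉ (π i).image Prod.snd) :
    cnt (fun S => Ext S π) = (n - (π i).card) * cnt (fun S => Ext S (ins π i (x, y))) := by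
  have hT : ∀ S : Tup n k, Ext S π → S i x ∈ Finset.univ \ (π i).image Prod.snd := by
    intro S hS
    rw [Finset.mem_sdiff]
    exact ⟨Finset.mem_univ _, fresh_ran hS hx⟩
  rw [cnt_partition (fun S => S i x) (Finset.univ \ (π i).image Prod.snd) hT]
  have heach : ∀ y' ∈ Finset.univ \ (π i).image Prod.snd,
      cnt (fun S => Ext S π ∧ S i x = y') = cnt (fun S => Ext S (ins π i (x, y))) := by
    intro y' hy'
    rw [Finset.mem_sdiff] at hy'
    rw [cnt_congr (fun S => ext_ins.symm)]
    exact cnt_swap hy'.2 hy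
  rw [Finset.sum_congr rfl heach, Finset.sum_const, smul_eq_mul]
  congr 1
  rw [Finset.card_sdiff_of_subset (Finset.subset_univ _), card_snd hok, Finset.card_univ,
    Fintype.card_fin]

lemma exists_fresh (π : Fin k → Finset (Fin n × Fin n)) (h : Dtot π < n) :
    ∃ p : Fin n, ∀ i, p ∉ (π i).image Prod.snd := by
  by_contra hcon
  push_neg at hcon
  have hsub : (Finset.univ : Finset (Fin n)) ⊆
      Finset.univ.biUnion (fun i => (π i).image Prod.snd) := by
    intro p _
    rcases hcon p with ⟨i, hi⟩
    exact Finset.mem_biUnion.mpr ⟨i, Finset.mem_univ _, hi⟩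
  have h1 : n ≤ ∑ i, ((π i).image Prod.snd).card := by
    calc n = (Finset.univ : Finset (Fin n)).card := by simp
    _ ≤ _ := (Finset.card_le_card hsub).trans (Finset.card_biUnion_le)
  have h2 : ∑ i, ((π i).image Prod.snd).card ≤ Dtot π :=
    Finset.sum_le_sum fun i _ => Finset.card_image_le
  omega


theorem core (c : List (Fin k)) (hc : c ≠ []) (m : ℕ) (hnm : 2 * (c.length * m) ≤ n)
    (μ : ℕ) :
    ∀ (s : ℕ) (u : List (Fin k)) (π : Fin k → Finset (Fin n × Fin n)) (x p : Fin n),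
      s * (c.length + 1) + u.length ≤ μ →
      Ok π → (∀ i, p ∉ (π i).image Prod.snd) →
      Dtot π + u.length + c.length * s ≤ c.length * m →
      (cnt (fun S => Ext S π ∧ trj S u x = p ∧ ∀ z, trj S c z = z) : ℝ) ≤
        ((if u = [] ∧ x = p then 1 else 0) +
            u.length / ((n : ℝ) - Dtot π - u.length + 1)) *
          ((2 * c.length : ℝ) / n) ^ s * cnt (fun S => Ext S π) := by
  have hl : 1 ≤ c.length := List.length_pos_iff.mpr hc
  induction μ using Nat.strong_induction_on with
  | _ μ IH =>
  -- an auxiliary step lemma: spending a fresh point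
  have step : ∀ (π' : Fin k → Finset (Fin n × Fin n)) (s' : ℕ), Ok π' →
      Dtot π' + c.length * (s' + 1) ≤ c.length * m →
      s' * (c.length + 1) + c.length < μ →
      (cnt (fun S => Ext S π' ∧ ∀ z, trj S c z = z) : ℝ) ≤
        ((2 * c.length : ℝ) / n) ^ (s' + 1) * cnt (fun S => Ext S π') := by
    intro π' s' hok' hbud' hμ'
    have hexp : c.length * (s' + 1) = c.length * s' + c.length := by ring
    have hlm : c.length * m ≤ n := by omega
    have hD1 : Dtot π' + c.length ≤ c.length * m := by omega
    have hDn : Dtot π' < n := by omega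
    have hn0 : 0 < n := by omega
    obtain ⟨p', hp'⟩ := exists_fresh π' hDn
    have hmono : (cnt (fun S => Ext S π' ∧ ∀ z, trj S c z = z) : ℝ) ≤
        (cnt (fun S => Ext S π' ∧ trj S c p' = p' ∧ ∀ z, trj S c z = z) : ℝ) := by
      have := cnt_mono (P := fun S => Ext S π' ∧ ∀ z, trj S c z = z)
        (Q := fun S => Ext S π' ∧ trj S c p' = p' ∧ ∀ z, trj S c z = z)
        (fun S h => ⟨h.1, h.2 p', h.2⟩)
      exact_mod_cast this
    have hIH := IH (s' * (c.length + 1) + c.length) hμ' s' c π' p' p' le_rfl hok' hp'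
      (by omega)
    rw [if_neg (by simp [hc])] at hIH
    have hposd : (0:ℝ) < (n : ℝ) - Dtot π' - c.length + 1 := by
      have : Dtot π' + c.length ≤ n := by omega
      have := (Nat.cast_le (α := ℝ)).mpr this
      push_cast at this ⊢
      linarith
    have hkey : (c.length : ℝ) / ((n : ℝ) - Dtot π' - c.length + 1) ≤
        (2 * c.length : ℝ) / n := by
      rw [div_le_div_iff₀ hposd (by exact_mod_cast hn0)]
      have h2 : 2 * (Dtot π' + c.length) ≤ n := by omega
      have h2R := (Nat.cast_le (α := ℝ)).mpr h2
      push_cast at h2R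
      nlinarith [Nat.cast_nonneg (α := ℝ) c.length]
    calc (cnt (fun S => Ext S π' ∧ ∀ z, trj S c z = z) : ℝ)
        ≤ (cnt (fun S => Ext S π' ∧ trj S c p' = p' ∧ ∀ z, trj S c z = z) : ℝ) := hmono
      _ ≤ ((0 : ℝ) + c.length / ((n : ℝ) - Dtot π' - c.length + 1)) *
            ((2 * c.length : ℝ) / n) ^ s' * cnt (fun S => Ext S π') := hIH
      _ ≤ ((2 * c.length : ℝ) / n) ^ (s' + 1) * cnt (fun S => Ext S π') := by
          rw [zero_add, pow_succ]
          have hpow : (0:ℝ) ≤ ((2 * c.length : ℝ) / n) ^ s' :=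
            pow_nonneg (div_nonneg (by positivity) (Nat.cast_nonneg n)) s'
          have hNn : (0:ℝ) ≤ (cnt (fun S => Ext S π') : ℝ) := Nat.cast_nonneg _
          calc (c.length / ((n : ℝ) - Dtot π' - c.length + 1)) *
                ((2 * c.length : ℝ) / n) ^ s' * cnt (fun S => Ext S π')
              ≤ ((2 * c.length : ℝ) / n) * ((2 * c.length : ℝ) / n) ^ s' *
                cnt (fun S => Ext S π') := by
                apply mul_le_mul_of_nonneg_right _ hNn
                exact mul_le_mul_of_nonneg_right hkey hpow
            _ = ((2 * c.length : ℝ) / n) ^ s' * ((2 * c.length : ℝ) / n) *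
                cnt (fun S => Ext S π') := by ring
  intro s u π x p hμ hok hfresh hbud
  have hn2 : 2 * (c.length * m) ≤ n := hnm
  match u with
  | [] =>
    by_cases hxp : x = p
    · subst hxp
      rw [if_pos ⟨rfl, rfl⟩]
      simp only [List.length_nil, Nat.cast_zero, zero_div, add_zero]
      match s with
      | 0 =>
        simp only [pow_zero, one_mul]
        have := cnt_mono
          (P := fun S => Ext S π ∧ trj S [] x = x ∧ ∀ z, trj S c z = z)
          (Q := fun S => Ext S π) (fun S h => h.1)
        exact Nat.cast_le.mpr this
      | s' + 1 =>
        have hmeas : s' * (c.length + 1) + c.length < μ := by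
          have hexp : (s' + 1) * (c.length + 1) = s' * (c.length + 1) + c.length + 1 := by
            ring
          simp only [List.length_nil, add_zero] at hμ
          omega
        have hbud' : Dtot π + c.length * (s' + 1) ≤ c.length * m := by
          simp only [List.length_nil] at hbud
          omega
        have hmono := cnt_mono
          (P := fun S => Ext S π ∧ trj S [] x = x ∧ ∀ z, trj S c z = z)
          (Q := fun S => Ext S π ∧ ∀ z, trj S c z = z)
          (fun S h => ⟨h.1, h.2.2⟩)
        calc (cnt (fun S => Ext S π ∧ trj S [] x = x ∧ ∀ z, trj S c z = z) : ℝ)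
            ≤ (cnt (fun S => Ext S π ∧ ∀ z, trj S c z = z) : ℝ) := Nat.cast_le.mpr hmono
          _ ≤ ((2 * c.length : ℝ) / n) ^ (s' + 1) * cnt (fun S => Ext S π) :=
              step π s' hok hbud' hmeas
          _ = 1 * ((2 * c.length : ℝ) / n) ^ (s' + 1) * cnt (fun S => Ext S π) := by
              ring
    · rw [if_neg (fun h => hxp h.2)]
      have hz : cnt (fun S => Ext S π ∧ trj S [] x = p ∧ ∀ z, trj S c z = z) = 0 := by
        rw [cnt_congr (Q := fun _ => False) (fun S => ?_)]
        · simp [cnt]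
        · simp only [trj_nil, iff_false]
          rintro ⟨_, h2, _⟩
          exact hxp h2
      rw [hz]
      simp
  | i :: u' =>
    have hlen : (i :: u').length = u'.length + 1 := rfl
    rw [if_neg (by simp : ¬((i :: u') = [] ∧ x = p)), zero_add]
    have hlm : c.length * m ≤ n := by omega
    have hbud2 : Dtot π + u'.length + 1 + c.length * s ≤ c.length * m := by
      rw [hlen] at hbud; omega
    have hDun : Dtot π + u'.length + 1 ≤ n := by omega
    have hcast : ((n : ℝ) - Dtot π - (u'.length + 1) + 1) =
        (n : ℝ) - Dtot π - ((i :: u').length : ℕ) + 1 := by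
      rw [hlen]; push_cast; ring
    have hddpos : (0:ℝ) < (n:ℝ) - Dtot π - (u'.length + 1) + 1 := by
      have := (Nat.cast_le (α := ℝ)).mpr hDun
      push_cast at this ⊢
      linarith
    have hpow : (0:ℝ) ≤ ((2 * c.length : ℝ) / n) ^ s :=
      pow_nonneg (div_nonneg (by positivity) (Nat.cast_nonneg n)) s
    have hN0 : (0:ℝ) ≤ (cnt (fun S => Ext S π) : ℝ) := Nat.cast_nonneg _
    by_cases hxd : x ∈ (π i).image Prod.fst
    · -- the first step of the trajectory is already determined
      obtain ⟨a, ha, hax⟩ := Finset.mem_image.mp hxd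
      have hSx : ∀ S : Tup n k, Ext S π → S i x = a.2 := by
        intro S h1
        rw [← hax]
        exact h1 i a ha
      have hcongr : cnt (fun S => Ext S π ∧ trj S (i :: u') x = p ∧ ∀ z, trj S c z = z)
          = cnt (fun S => Ext S π ∧ trj S u' a.2 = p ∧ ∀ z, trj S c z = z) := by
        apply cnt_congr
        intro S
        constructor
        · rintro ⟨h1, h2, h3⟩
          rw [trj_cons, hSx S h1] at h2
          exact ⟨h1, h2, h3⟩
        · rintro ⟨h1, h2, h3⟩
          refine ⟨h1, ?_, h3⟩
          rw [trj_cons, hSx S h1]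
          exact h2
      rw [hcongr]
      have hmeas : s * (c.length + 1) + u'.length < μ := by
        rw [hlen] at hμ; omega
      have hIH := IH _ hmeas s u' π a.2 p le_rfl hok hfresh (by omega)
      have hap : ¬(u' = [] ∧ a.2 = p) := by
        rintro ⟨-, h⟩
        exact hfresh i (Finset.mem_image.mpr ⟨a, ha, h⟩)
      rw [if_neg hap, zero_add] at hIH
      refine hIH.trans ?_
      apply mul_le_mul_of_nonneg_right _ hN0
      apply mul_le_mul_of_nonneg_right _ hpow
      rw [← hcast, hlen]
      push_cast
      apply div_le_div₀ (by positivity) (by linarith) hddpos (by linarith)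
    · -- the first step of the trajectory is free
      have hxq : ∀ y : Fin n, (x, y) ∉ π i := fun y hmem =>
        hxd (Finset.mem_image.mpr ⟨(x, y), hmem, rfl⟩)
      have hpmem : p ∈ Finset.univ \ (π i).image Prod.snd :=
        Finset.mem_sdiff.mpr ⟨Finset.mem_univ _, hfresh i⟩
      have hpart := cnt_partition
        (P := fun S => Ext S π ∧ trj S (i :: u') x = p ∧ ∀ z, trj S c z = z)
        (fun S => S i x) (Finset.univ \ (π i).image Prod.snd)
        (fun S hS => Finset.mem_sdiff.mpr ⟨Finset.mem_univ _, fresh_ran hS.1 hxd⟩)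
      have hcongr : ∀ y ∈ Finset.univ \ (π i).image Prod.snd,
          cnt (fun S => (Ext S π ∧ trj S (i :: u') x = p ∧ (∀ z, trj S c z = z)) ∧ S i x = y)
          = cnt (fun S => Ext S (ins π i (x, y)) ∧ trj S u' y = p ∧ ∀ z, trj S c z = z) := by
        intro y hy
        apply cnt_congr
        intro S
        constructor
        · rintro ⟨⟨h1, h2, h3⟩, h4⟩
          rw [trj_cons, h4] at h2
          exact ⟨ext_ins.mpr ⟨h1, h4⟩, h2, h3⟩
        · rintro ⟨h1, h2, h3⟩
          obtain ⟨h1', h4⟩ := ext_ins.mp h1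
          exact ⟨⟨h1', by rw [trj_cons, h4]; exact h2, h3⟩, h4⟩
      rw [Finset.sum_congr rfl hcongr] at hpart
      -- notation
      have hcard_le : (π i).card ≤ Dtot π :=
        Finset.single_le_sum (f := fun j => (π j).card) (fun j _ => Nat.zero_le _)
          (Finset.mem_univ i)
      have hDn : Dtot π < n := by omega
      have htN1 : 1 ≤ n - (π i).card := by omega
      have htNR : (0:ℝ) < ((n - (π i).card : ℕ) : ℝ) := by exact_mod_cast htN1
      have hTcard : (Finset.univ \ (π i).image Prod.snd).card = n - (π i).card := by
        rw [Finset.card_sdiff_of_subset (Finset.subset_univ _), card_snd hok, Finset.card_univ,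
          Fintype.card_fin]
      have hNy : ∀ y ∈ Finset.univ \ (π i).image Prod.snd,
          (cnt (fun S => Ext S (ins π i (x, y))) : ℝ) =
            (cnt (fun S => Ext S π) : ℝ) / ((n - (π i).card : ℕ) : ℝ) := by
        intro y hy
        have h0 := cnt_ext_insert_eq hok hxd (Finset.mem_sdiff.mp hy).2
        have hR : (cnt (fun S => Ext S π) : ℝ) =
            ((n - (π i).card : ℕ) : ℝ) * (cnt (fun S => Ext S (ins π i (x, y))) : ℝ) := by
          exact_mod_cast congrArg (Nat.cast (R := ℝ)) h0
        rw [eq_div_iff (ne_of_gt htNR), hR]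
        ring
      have hDins : ∀ y : Fin n, Dtot (ins π i (x, y)) = Dtot π + 1 :=
        fun y => Dtot_ins (hxq y)
      have hfresh' : ∀ y : Fin n, y ≠ p →
          ∀ j, p ∉ ((ins π i (x, y)) j).image Prod.snd := by
        intro y hyp j
        by_cases hj : j = i
        · subst hj
          rw [ins_self, Finset.image_insert]
          intro hmem
          rcases Finset.mem_insert.mp hmem with h | h
          · exact hyp h.symm
          · exact hfresh j h
        · rw [ins_ne _ _ hj]
          exact hfresh j
      -- bound for the terms with y ≠ p
      have hterm : ∀ y ∈ (Finset.univ \ (π i).image Prod.snd) \ {p},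
          (cnt (fun S => Ext S (ins π i (x, y)) ∧ trj S u' y = p ∧ ∀ z, trj S c z = z) : ℝ)
            ≤ (u'.length / ((n:ℝ) - Dtot π - (u'.length + 1) + 1)) *
                ((2 * c.length : ℝ) / n) ^ s *
                ((cnt (fun S => Ext S π) : ℝ) / ((n - (π i).card : ℕ) : ℝ)) := by
        intro y hy
        obtain ⟨hyT, hyp⟩ := Finset.mem_sdiff.mp hy
        have hyp' : y ≠ p := by simpa using hyp
        have hmeas : s * (c.length + 1) + u'.length < μ := by
          rw [hlen] at hμ; omega
        have hIH := IH _ hmeas s u' (ins π i (x, y)) y p le_rfl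
          (Ok_ins hok hxd (Finset.mem_sdiff.mp hyT).2) (hfresh' y hyp')
          (by rw [hDins]; omega)
        rw [if_neg (fun h => hyp' h.2), zero_add, hDins, hNy y hyT] at hIH
        refine hIH.trans (le_of_eq ?_)
        congr 2
        push_cast
        ring
      -- bound for the term y = p
      have htermp :
          (cnt (fun S => Ext S (ins π i (x, p)) ∧ trj S u' p = p ∧ ∀ z, trj S c z = z) : ℝ)
            ≤ ((2 * c.length : ℝ) / n) ^ s *
                ((cnt (fun S => Ext S π) : ℝ) / ((n - (π i).card : ℕ) : ℝ)) := by
        rw [← hNy p hpmem]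
        have hmono := cnt_mono
          (P := fun S => Ext S (ins π i (x, p)) ∧ trj S u' p = p ∧ ∀ z, trj S c z = z)
          (Q := fun S => Ext S (ins π i (x, p)) ∧ ∀ z, trj S c z = z)
          (fun S h => ⟨h.1, h.2.2⟩)
        match s with
        | 0 =>
          simp only [pow_zero, one_mul]
          have hmono2 := cnt_mono
            (P := fun S => Ext S (ins π i (x, p)) ∧ ∀ z, trj S c z = z)
            (Q := fun S => Ext S (ins π i (x, p))) (fun S h => h.1)
          exact_mod_cast hmono.trans hmono2
        | s' + 1 =>
          have hmeas : s' * (c.length + 1) + c.length < μ := by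
            have hexp : (s' + 1) * (c.length + 1) = s' * (c.length + 1) + c.length + 1 := by
              ring
            rw [hlen] at hμ
            omega
          have hst := step (ins π i (x, p)) s' (Ok_ins hok hxd (hfresh i))
            (by rw [hDins]; omega) hmeas
          exact (Nat.cast_le.mpr hmono).trans hst
      -- put everything together
      rw [hpart, Finset.sum_eq_sum_sdiff_singleton_add hpmem]
      push_cast
      rw [← hcast, hlen, Nat.cast_add, Nat.cast_one]
      have htd : (n : ℝ) - Dtot π - (u'.length + 1) + 1 ≤ ((n - (π i).card : ℕ) : ℝ) := by
        rw [Nat.cast_sub (by omega : (π i).card ≤ n)]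
        have h3 := (Nat.cast_le (α := ℝ)).mpr hcard_le
        push_cast at h3 ⊢
        linarith
      set dd := (n : ℝ) - Dtot π - ((u'.length : ℝ) + 1) + 1 with hdd
      set tR := ((n - (π i).card : ℕ) : ℝ) with htRdef
      set A := ((2 * c.length : ℝ) / n) ^ s with hA
      set N := (cnt (fun S => Ext S π) : ℝ) with hNdef
      have hsum : ∑ y ∈ (Finset.univ \ (π i).image Prod.snd) \ {p},
          (cnt (fun S => Ext S (ins π i (x, y)) ∧ trj S u' y = p ∧
            ∀ z, trj S c z = z) : ℝ) ≤
          (tR - 1) * ((u'.length : ℝ) / dd * A * (N / tR)) := by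
        refine (Finset.sum_le_sum hterm).trans (le_of_eq ?_)
        rw [Finset.sum_const, Finset.card_sdiff_of_subset (Finset.singleton_subset_iff.mpr hpmem),
          hTcard, nsmul_eq_mul, Finset.card_singleton, Nat.cast_sub htN1, Nat.cast_one]
      refine le_trans (add_le_add hsum htermp) ?_
      have h1 : (tR - 1) * (N / tR) ≤ N := by
        rw [show (tR - 1) * (N / tR) = N * ((tR - 1) / tR) from by ring]
        calc N * ((tR - 1) / tR) ≤ N * 1 := by
              apply mul_le_mul_of_nonneg_left _ hN0
              rw [div_le_one htNR]
              linarith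
          _ = N := mul_one N
      have h2 : N / tR ≤ N / dd :=
        div_le_div_of_nonneg_left hN0 hddpos htd
      calc (tR - 1) * ((u'.length : ℝ) / dd * A * (N / tR)) + A * (N / tR)
          ≤ (u'.length : ℝ) / dd * A * N + A * (N / dd) := by
            apply add_le_add
            · calc (tR - 1) * ((u'.length : ℝ) / dd * A * (N / tR))
                  = (u'.length : ℝ) / dd * A * ((tR - 1) * (N / tR)) := by ring
                _ ≤ (u'.length : ℝ) / dd * A * N := by
                    apply mul_le_mul_of_nonneg_left h1
                    exact mul_nonneg (div_nonneg (Nat.cast_nonneg _) hddpos.le) hpow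
            · exact mul_le_mul_of_nonneg_left h2 hpow
        _ = ((u'.length : ℝ) + 1) / dd * A * N := by
            field_simp




lemma prod_apply_trj (S : Tup n k) : ∀ (L : List (Fin k)) (z : Fin n),
    ((L.map S).prod : Equiv.Perm (Fin n)) z = trj S L.reverse z := by
  intro L
  induction L with
  | nil => intro z; simp [trj]
  | cons i L ih =>
    intro z
    simp only [List.map_cons, List.prod_cons, List.reverse_cons, Equiv.Perm.mul_apply]
    rw [ih z]
    unfold trj
    rw [List.foldl_append]
    rfl

lemma lift_positive (S : Tup n k) (w : FreeGroup (Fin k))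
    (hpos : ∀ p ∈ w.toWord, p.2 = true) :
    FreeGroup.lift S w = ((w.toWord.map Prod.fst).map S).prod := by
  conv_lhs => rw [← FreeGroup.mk_toWord (x := w)]
  rw [FreeGroup.lift_mk]
  congr 1
  rw [List.map_map]
  apply List.map_congr_left
  intro a ha
  have h2 := hpos a ha
  simp [h2]

end WordProbAux

open WordProbAux in
theorem wordProb_positive_symm_aux (k ℓ : ℕ) (hl : 1 ≤ ℓ) (w : FreeGroup (Fin k))
    (hpos : ∀ p ∈ FreeGroup.toWord w, p.2 = true)
    (hlen : (FreeGroup.toWord w).length = ℓ) (n : ℕ) :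
    (Nat.card {S : Fin k → Equiv.Perm (Fin n) // (FreeGroup.lift S) w = 1} : ℝ) /
        (Nat.card (Equiv.Perm (Fin n))) ^ k ≤
      ((2 * ℓ : ℝ) / n) ^ (n / (2 * ℓ)) := by
  classical
  set c : List (Fin k) := (w.toWord.map Prod.fst).reverse with hcdef
  have hclen : c.length = ℓ := by
    rw [hcdef, List.length_reverse, List.length_map, hlen]
  have hcne : c ≠ [] := by
    intro h
    rw [h] at hclen
    simp at hclen
    omega
  have hNum : Nat.card {S : Fin k → Equiv.Perm (Fin n) // (FreeGroup.lift S) w = 1}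
      = cnt (n := n) (k := k) (fun S => (FreeGroup.lift S) w = 1) := by
    rw [Nat.card_eq_fintype_card, cnt, Fintype.card_subtype]
    congr!
  have hemp : ∀ S : Tup n k, Ext S (fun _ => (∅ : Finset (Fin n × Fin n))) := by
    intro S i a ha
    simp at ha
  have hDen : (Nat.card (Equiv.Perm (Fin n))) ^ k
      = cnt (n := n) (k := k) (fun S => Ext S (fun _ => ∅)) := by
    rw [Nat.card_eq_fintype_card, cnt]
    rw [Finset.filter_true_of_mem (fun S _ => hemp S), Finset.card_univ, Fintype.card_fun,
      Fintype.card_fin]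
  have hDpos : (0:ℝ) < ((Nat.card (Equiv.Perm (Fin n)) : ℝ)) ^ k := by
    have : 0 < Nat.card (Equiv.Perm (Fin n)) := Nat.card_pos
    positivity
  have hDcast : ((Nat.card (Equiv.Perm (Fin n)) : ℝ)) ^ k
      = (cnt (n := n) (k := k) (fun S => Ext S (fun _ => ∅)) : ℝ) := by
    rw [← hDen]
    push_cast
    ring
  rw [div_le_iff₀ hDpos, hDcast]
  rcases Nat.eq_zero_or_pos (n / (2 * ℓ)) with hm0 | hm1
  · rw [hm0, pow_zero, one_mul, hNum]
    apply Nat.cast_le.mpr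
    exact cnt_mono (fun S _ => hemp S)
  · obtain ⟨m', hm'⟩ : ∃ m', n / (2 * ℓ) = m' + 1 := ⟨n / (2 * ℓ) - 1, by omega⟩
    have h2l : 2 * ℓ ≤ n := by
      by_contra hcon
      push_neg at hcon
      have : n / (2 * ℓ) = 0 := Nat.div_eq_of_lt hcon
      omega
    have hn0 : 0 < n := by omega
    have hnm : 2 * (c.length * (m' + 1)) ≤ n := by
      rw [hclen]
      have he : 2 * (ℓ * (m' + 1)) = (m' + 1) * (2 * ℓ) := by ring
      rw [he, ← hm']
      exact Nat.div_mul_le_self n (2 * ℓ)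
    set p0 : Fin n := ⟨0, hn0⟩ with hp0
    have hE : ∀ S : Tup n k, FreeGroup.lift S w = 1 → ∀ z, trj S c z = z := by
      intro S hS z
      have h1 : ((w.toWord.map Prod.fst).map S).prod = 1 := by
        rw [← lift_positive S w hpos]
        exact hS
      have h2 := prod_apply_trj S (w.toWord.map Prod.fst) z
      rw [h1] at h2
      rw [hcdef]
      exact h2.symm
    have hok0 : Ok (n := n) (k := k) (fun _ => ∅) := by
      intro i a ha
      simp at ha
    have hfresh0 : ∀ i : Fin k, p0 ∉ ((fun _ => (∅ : Finset (Fin n × Fin n))) i).image Prod.snd := by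
      intro i
      simp
    have hD0 : Dtot (n := n) (k := k) (fun _ => ∅) = 0 := by
      simp [Dtot]
    have hbud0 : Dtot (n := n) (k := k) (fun _ => ∅) + c.length + c.length * m'
        ≤ c.length * (m' + 1) := by
      have he : c.length * (m' + 1) = c.length * m' + c.length := by ring
      omega
    have hcore := core (n := n) (k := k) c hcne (m' + 1) hnm
      (m' * (c.length + 1) + c.length) m' c (fun _ => ∅) p0 p0 le_rfl hok0 hfresh0 hbud0
    rw [if_neg (fun h => hcne h.1), zero_add, hD0] at hcore
    have hmono : (cnt (n := n) (k := k) (fun S => (FreeGroup.lift S) w = 1) : ℝ)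
        ≤ (cnt (fun S => Ext S (fun _ => ∅) ∧ trj S c p0 = p0 ∧ ∀ z, trj S c z = z) : ℝ) := by
      apply Nat.cast_le.mpr
      exact cnt_mono (fun S h => ⟨hemp S, hE S h p0, hE S h⟩)
    have hkey : (c.length : ℝ) / ((n : ℝ) - (0:ℕ) - c.length + 1) ≤ (2 * c.length : ℝ) / n := by
      have hpos1 : (0:ℝ) < (n : ℝ) - (0:ℕ) - c.length + 1 := by
        have := (Nat.cast_le (α := ℝ)).mpr (hclen ▸ (by omega : ℓ ≤ n))
        push_cast
        push_cast at this
        linarith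
      rw [div_le_div_iff₀ hpos1 (by exact_mod_cast hn0)]
      have h2R := (Nat.cast_le (α := ℝ)).mpr h2l
      rw [hclen]
      push_cast at h2R ⊢
      nlinarith [Nat.cast_nonneg (α := ℝ) ℓ]
    have hNpos : (0:ℝ) ≤ (cnt (n := n) (k := k) (fun S => Ext S (fun _ => ∅)) : ℝ) :=
      Nat.cast_nonneg _
    have hpow : (0:ℝ) ≤ ((2 * c.length : ℝ) / n) ^ m' :=
      pow_nonneg (div_nonneg (by positivity) (Nat.cast_nonneg n)) m'
    rw [hNum, hm', ← hclen]
    calc (cnt (n := n) (k := k) (fun S => (FreeGroup.lift S) w = 1) : ℝ)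
        ≤ (cnt (fun S => Ext S (fun _ => ∅) ∧ trj S c p0 = p0 ∧ ∀ z, trj S c z = z) : ℝ) :=
          hmono
      _ ≤ ((c.length : ℝ) / ((n : ℝ) - (0:ℕ) - c.length + 1)) *
            ((2 * c.length : ℝ) / n) ^ m' *
            (cnt (n := n) (k := k) (fun S => Ext S (fun _ => ∅)) : ℝ) := hcore
      _ ≤ ((2 * c.length : ℝ) / n) * ((2 * c.length : ℝ) / n) ^ m' *
            (cnt (n := n) (k := k) (fun S => Ext S (fun _ => ∅)) : ℝ) := by
          apply mul_le_mul_of_nonneg_right _ hNpos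
          exact mul_le_mul_of_nonneg_right hkey hpow
      _ = ((2 * (c.length : ℝ)) / n) ^ (m' + 1) *
            (cnt (n := n) (k := k) (fun S => Ext S (fun _ => ∅)) : ℝ) := by
          rw [pow_succ]
          ring

/-- For a positive (semigroup) word `w ∈ F_k` of length `ℓ ≥ 1` and any `n`,
the probability that `w` evaluates to the identity at `k` independent uniformly
random elements of `S_n` is at most `(2ℓ/n)^⌊n/(2ℓ)⌋`. -/
theorem wordProb_positive_symm (k ℓ : ℕ) (hl : 1 ≤ ℓ) (w : FreeGroup (Fin k))
    (hpos : ∀ p ∈ FreeGroup.toWord w, p.2 = true)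
    (hlen : (FreeGroup.toWord w).length = ℓ) (n : ℕ) :
    (Nat.card {S : Fin k → Equiv.Perm (Fin n) // (FreeGroup.lift S) w = 1} : ℝ) /
        (Nat.card (Equiv.Perm (Fin n))) ^ k ≤
      ((2 * ℓ : ℝ) / n) ^ (n / (2 * ℓ)) := by
  open WordProbAux in
  exact wordProb_positive_symm_aux k ℓ hl w hpos hlen n
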